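/- There exists a constant R > 0 such that for all integers s > t ≥ 1 one has ρ(s,t) < 1 + R. -/

import Mathlib

open Finset MeasureTheory ProbabilityTheory

/-- `V r t` is the variance of `S_t = Z_1 + … + Z_t` for a centered stationary sequence
with covariance function `r`. -/
noncomputable def V (r : ℤ → ℝ) (t : ℕ) : ℝ :=
  (t : ℝ) * r 0 + 2 * ∑ i ∈ Finset.Icc 2 t, ∑ j ∈ Finset.Icc 1 (i - 1), r ((i : ℤ) - (j : ℤ))

/-- `Cst r s t` is the covariance `cov(S_s - S_t, S_t)` of the partial-sum process
of a centered stationary sequence with covariance function `r`. -/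
noncomputable def Cst (r : ℤ → ℝ) (s t : ℕ) : ℝ :=
  ∑ i ∈ Finset.Icc (t + 1) s, ∑ j ∈ Finset.Icc 1 t, r ((i : ℤ) - (j : ℤ))

theorem rho_upper_bound
    (r : ℤ → ℝ) (hEven : ∀ t : ℤ, r (-t) = r t)
    (hAbsSum : Summable fun t : ℤ => |r t|)
    (hSumZero : ∑' t : ℤ, r t = 0)
    (T0 : ℕ) (hT0 : 2 ≤ T0)
    (J1 J2 χ : ℝ) (hJ12 : J1 ≤ J2) (hJ2 : J2 < 0)
    (hχ : χ ∈ Set.Ioo (-2 : ℝ) (-1))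
    (hbound : ∀ t : ℤ, (T0 : ℤ) ≤ t →
      J1 * (t : ℝ) ^ χ ≤ r t ∧ r t ≤ J2 * (t : ℝ) ^ χ)
    (H : ℝ) (hH : H = χ / 2 + 1)
    (hVpos : ∀ t : ℕ, 1 ≤ t → 0 < V r t) :
    ∃ R : ℝ, 0 < R ∧
      ∀ s t : ℕ, 1 ≤ t → t < s → Cst r s t / V r t + 1 < 1 + R := by
  obtain ⟨hχ1, hχ2⟩ := hχ
  have hrsum : Summable r := hAbsSum.of_abs
  -- r is negative beyond T0
  have hrneg : ∀ k : ℤ, (T0 : ℤ) ≤ k → r k < 0 := by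
    intro k hk
    have hk0 : (0 : ℝ) < (k : ℝ) := by
      have : (0 : ℤ) < k := by omega
      exact_mod_cast this
    have h2 := (hbound k hk).2
    have hpow : (0 : ℝ) < (k : ℝ) ^ χ := Real.rpow_pos_of_pos hk0 χ
    nlinarith
  set A : ℝ := ∑' t : ℤ, |r t| with hA
  have hA0 : 0 ≤ A := tsum_nonneg fun _ => abs_nonneg _
  have hsumA : ∀ F : Finset ℤ, ∑ k ∈ F, |r k| ≤ A :=
    fun F => Summable.sum_le_tsum F (fun _ _ => abs_nonneg _) hAbsSum
  -- Uniform upper bound on Cst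
  have hCst : ∀ s t : ℕ, 1 ≤ t → t < s → Cst r s t ≤ (T0 : ℝ) * A := by
    intro s t ht hts
    rw [Cst, Finset.sum_comm]
    rw [← Finset.sum_filter_add_sum_filter_not (Finset.Icc 1 t)
      (fun j => j + T0 ≤ t + 1) (fun j => ∑ i ∈ Finset.Icc (t + 1) s, r ((i : ℤ) - (j : ℤ)))]
    have h1 : ∑ j ∈ (Finset.Icc 1 t).filter (fun j => j + T0 ≤ t + 1),
        (∑ i ∈ Finset.Icc (t + 1) s, r ((i : ℤ) - (j : ℤ))) ≤ 0 := by
      apply Finset.sum_nonpos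
      intro j hj
      apply Finset.sum_nonpos
      intro i hi
      simp only [Finset.mem_filter, Finset.mem_Icc] at hj hi
      exact le_of_lt (hrneg _ (by omega))
    have h2 : ∑ j ∈ (Finset.Icc 1 t).filter (fun j => ¬(j + T0 ≤ t + 1)),
        (∑ i ∈ Finset.Icc (t + 1) s, r ((i : ℤ) - (j : ℤ))) ≤ (T0 : ℝ) * A := by
      have hcard : ((Finset.Icc 1 t).filter (fun j => ¬(j + T0 ≤ t + 1))).card ≤ T0 := by
        have hsub : (Finset.Icc 1 t).filter (fun j => ¬(j + T0 ≤ t + 1))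
            ⊆ Finset.Ioc (t - T0) t := by
          intro j hj
          simp only [Finset.mem_filter, Finset.mem_Icc] at hj
          simp only [Finset.mem_Ioc]
          omega
        calc ((Finset.Icc 1 t).filter (fun j => ¬(j + T0 ≤ t + 1))).card
            ≤ (Finset.Ioc (t - T0) t).card := Finset.card_le_card hsub
          _ ≤ T0 := by rw [Nat.card_Ioc]; omega
      have hinner : ∀ j ∈ (Finset.Icc 1 t).filter (fun j => ¬(j + T0 ≤ t + 1)),
          (∑ i ∈ Finset.Icc (t + 1) s, r ((i : ℤ) - (j : ℤ))) ≤ A := by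
        intro j _
        calc ∑ i ∈ Finset.Icc (t + 1) s, r ((i : ℤ) - (j : ℤ))
            ≤ ∑ i ∈ Finset.Icc (t + 1) s, |r ((i : ℤ) - (j : ℤ))| :=
              Finset.sum_le_sum fun i _ => le_abs_self _
          _ = ∑ k ∈ (Finset.Icc (t + 1) s).image (fun i : ℕ => (i : ℤ) - (j : ℤ)), |r k| := by
              rw [Finset.sum_image]
              intro a _ b _ hab
              simp only at hab
              omega
          _ ≤ A := hsumA _
      calc ∑ j ∈ (Finset.Icc 1 t).filter (fun j => ¬(j + T0 ≤ t + 1)),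
          (∑ i ∈ Finset.Icc (t + 1) s, r ((i : ℤ) - (j : ℤ)))
          ≤ ∑ _j ∈ (Finset.Icc 1 t).filter (fun j => ¬(j + T0 ≤ t + 1)), A :=
            Finset.sum_le_sum hinner
        _ = ((Finset.Icc 1 t).filter (fun j => ¬(j + T0 ≤ t + 1))).card • A :=
            Finset.sum_const A
        _ ≤ (T0 : ℝ) * A := by
            rw [nsmul_eq_mul]
            exact mul_le_mul_of_nonneg_right (by exact_mod_cast hcard) hA0
    linarith
  -- the shifted sequence g
  set g : ℕ → ℝ := fun n => r ((n : ℤ) + 1) with hg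
  have hgsum : Summable g :=
    hrsum.comp_injective (fun a b h => by omega)
  have hnatsum : Summable (fun n : ℕ => r (n : ℤ)) :=
    hrsum.comp_injective (fun a b h => by omega)
  have hr0 : r 0 = -2 * ∑' n, g n := by
    have hnegsum : Summable (fun n : ℕ => r (-((n : ℤ) + 1))) :=
      hgsum.congr fun n => (hEven ((n : ℤ) + 1)).symm
    have hsplit := tsum_of_nat_of_neg_add_one hnatsum hnegsum
    rw [hSumZero] at hsplit
    have h1 : ∑' n : ℕ, r (n : ℤ) = r 0 + ∑' n, g n := by
      rw [Summable.tsum_eq_zero_add hnatsum]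
      simp only [Nat.cast_zero, Nat.cast_add, Nat.cast_one]
      rfl
    have h2 : ∑' n : ℕ, r (-((n : ℤ) + 1)) = ∑' n, g n :=
      tsum_congr fun n => hEven ((n : ℤ) + 1)
    rw [h1, h2] at hsplit
    linarith
  -- closed formula for V
  have hVform : ∀ t : ℕ, V r t
      = (t : ℝ) * r 0 + 2 * ∑ k ∈ Finset.Icc 1 (t - 1), ((t : ℝ) - (k : ℝ)) * r (k : ℤ) := by
    intro t
    rw [V]
    congr 2
    have hinner : ∀ i ∈ Finset.Icc 2 t,
        (∑ j ∈ Finset.Icc 1 (i - 1), r ((i : ℤ) - (j : ℤ)))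
          = ∑ k ∈ Finset.Icc 1 (i - 1), r (k : ℤ) := by
      intro i hi
      simp only [Finset.mem_Icc] at hi
      refine Finset.sum_nbij' (fun j => i - j) (fun k => i - k) ?_ ?_ ?_ ?_ ?_
      · intro a ha; simp only [Finset.mem_Icc] at *; omega
      · intro a ha; simp only [Finset.mem_Icc] at *; omega
      · intro a ha; simp only [Finset.mem_Icc] at ha; show i - (i - a) = a; omega
      · intro a ha; simp only [Finset.mem_Icc] at ha; show i - (i - a) = a; omega
      · intro a ha; simp only [Finset.mem_Icc] at ha
        show r ((i : ℤ) - (a : ℤ)) = r ((i - a : ℕ) : ℤ)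
        congr 1
        omega
    rw [Finset.sum_congr rfl hinner]
    rw [Finset.sum_comm' (s := Finset.Icc 2 t) (t := fun i => Finset.Icc 1 (i - 1))
      (t' := Finset.Icc 1 (t - 1)) (s' := fun k => Finset.Icc (k + 1) t)
      (by intro x y; simp only [Finset.mem_Icc]; omega)]
    apply Finset.sum_congr rfl
    intro k hk
    simp only [Finset.mem_Icc] at hk
    rw [Finset.sum_const, Nat.card_Icc, nsmul_eq_mul]
    have h1 : t + 1 - (k + 1) = t - k := by omega
    rw [h1, Nat.cast_sub (by omega : k ≤ t)]
  set D : ℝ := -2 * ∑ k ∈ Finset.Icc 1 (T0 - 1), (k : ℝ) * r (k : ℤ) with hD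
  -- lower bound on V for large t
  have hVlow : ∀ t : ℕ, 2 * T0 ≤ t → D + (-J2) * (t : ℝ) ^ (χ + 2) ≤ V r t := by
    intro t ht
    have htR : (0 : ℝ) < (t : ℝ) := by
      have : 0 < t := by omega
      exact_mod_cast this
    rw [hVform t, hr0]
    set S : ℝ := ∑' n, g n with hS
    set P : ℝ := ∑ n ∈ Finset.range (t - 1), g n with hP
    have e1 : ∑ k ∈ Finset.Icc 1 (t - 1), ((t : ℝ) - (k : ℝ)) * r (k : ℤ)
        = (t : ℝ) * ∑ k ∈ Finset.Icc 1 (t - 1), r (k : ℤ)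
          - ∑ k ∈ Finset.Icc 1 (t - 1), (k : ℝ) * r (k : ℤ) := by
      rw [Finset.mul_sum, ← Finset.sum_sub_distrib]
      exact Finset.sum_congr rfl fun k _ => by ring
    have e2 : ∑ k ∈ Finset.Icc 1 (t - 1), r (k : ℤ) = P := by
      rw [hP]
      refine Finset.sum_nbij' (fun k => k - 1) (fun n => n + 1) ?_ ?_ ?_ ?_ ?_
      · intro a ha; simp only [Finset.mem_Icc, Finset.mem_range] at *; omega
      · intro a ha; simp only [Finset.mem_Icc, Finset.mem_range] at *; omega
      · intro a ha; simp only [Finset.mem_Icc] at ha; show a - 1 + 1 = a; omega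
      · intro a _; show a + 1 - 1 = a; omega
      · intro a ha; simp only [Finset.mem_Icc] at ha
        simp only [hg]
        congr 1
        omega
    have e3 : S - P ≤ 0 := by
      have hadd := Summable.sum_add_tsum_nat_add (f := g) (t - 1) hgsum
      have htail : ∑' n : ℕ, g (n + (t - 1)) ≤ 0 := by
        apply tsum_nonpos
        intro n
        apply le_of_lt
        apply hrneg
        push_cast
        omega
      rw [hP, hS]
      linarith
    have e4 : ∑ k ∈ Finset.Icc 1 (t - 1), (k : ℝ) * r (k : ℤ)
        = ∑ k ∈ Finset.Icc 1 (T0 - 1), (k : ℝ) * r (k : ℤ)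
          + ∑ k ∈ Finset.Ioc (T0 - 1) (t - 1), (k : ℝ) * r (k : ℤ) := by
      have h01 : Finset.Icc 1 (t - 1) = Finset.Ioc 0 (t - 1) := by
        rw [← Finset.Icc_add_one_left_eq_Ioc, zero_add]
      have h02 : Finset.Icc 1 (T0 - 1) = Finset.Ioc 0 (T0 - 1) := by
        rw [← Finset.Icc_add_one_left_eq_Ioc, zero_add]
      rw [h01, h02,
        Finset.sum_Ioc_consecutive (fun k : ℕ => (k : ℝ) * r (k : ℤ))
          (by omega : 0 ≤ T0 - 1) (by omega : T0 - 1 ≤ t - 1)]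
    have e5 : ∑ k ∈ Finset.Ioc (T0 - 1) (t - 1), (k : ℝ) * r (k : ℤ)
        ≤ J2 * ((1 / 2) * (t : ℝ) ^ (χ + 2)) := by
      have hstep : ∀ k ∈ Finset.Ioc (T0 - 1) (t - 1),
          (k : ℝ) * r (k : ℤ) ≤ J2 * (t : ℝ) ^ (χ + 1) := by
        intro k hk
        simp only [Finset.mem_Ioc] at hk
        have hkT0 : (T0 : ℤ) ≤ (k : ℤ) := by omega
        have hkR : (0 : ℝ) < (k : ℝ) := by
          have : 0 < k := by omega
          exact_mod_cast this
        have hklet : (k : ℝ) ≤ (t : ℝ) := by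
          have : k ≤ t := by omega
          exact_mod_cast this
        have hb := (hbound (k : ℤ) hkT0).2
        have h1 : (k : ℝ) * r (k : ℤ) ≤ (k : ℝ) * (J2 * (k : ℝ) ^ χ) :=
          mul_le_mul_of_nonneg_left (by exact_mod_cast hb) hkR.le
        have h2 : (k : ℝ) * (J2 * (k : ℝ) ^ χ) = J2 * (k : ℝ) ^ (χ + 1) := by
          rw [Real.rpow_add_one hkR.ne' χ]
          ring
        have h3 : (t : ℝ) ^ (χ + 1) ≤ (k : ℝ) ^ (χ + 1) :=
          Real.rpow_le_rpow_of_nonpos hkR hklet (by linarith)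
        have h4 : J2 * (k : ℝ) ^ (χ + 1) ≤ J2 * (t : ℝ) ^ (χ + 1) := by
          nlinarith
        linarith
      have hsum := Finset.sum_le_card_nsmul _ _ _ hstep
      rw [nsmul_eq_mul] at hsum
      have hcard : (Finset.Ioc (T0 - 1) (t - 1)).card = t - T0 := by
        rw [Nat.card_Ioc]; omega
      rw [hcard] at hsum
      have hcast : ((t - T0 : ℕ) : ℝ) = (t : ℝ) - (T0 : ℝ) := by
        push_cast [Nat.cast_sub (by omega : T0 ≤ t)]
        ring
      rw [hcast] at hsum
      have hhalf : (t : ℝ) / 2 ≤ (t : ℝ) - (T0 : ℝ) := by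
        have : (T0 : ℝ) * 2 ≤ (t : ℝ) := by exact_mod_cast (by omega : T0 * 2 ≤ t)
        linarith
      have hpow1 : (0 : ℝ) < (t : ℝ) ^ (χ + 1) := Real.rpow_pos_of_pos htR _
      have hJt : J2 * (t : ℝ) ^ (χ + 1) < 0 := mul_neg_of_neg_of_pos hJ2 hpow1
      have h5 : ((t : ℝ) - (T0 : ℝ)) * (J2 * (t : ℝ) ^ (χ + 1))
          ≤ ((t : ℝ) / 2) * (J2 * (t : ℝ) ^ (χ + 1)) := by
        nlinarith
      have h6 : ((t : ℝ) / 2) * (J2 * (t : ℝ) ^ (χ + 1))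
          = J2 * ((1 / 2) * (t : ℝ) ^ (χ + 2)) := by
        have : (t : ℝ) ^ (χ + 2) = (t : ℝ) ^ (χ + 1) * (t : ℝ) := by
          rw [show χ + 2 = (χ + 1) + 1 by ring, Real.rpow_add_one htR.ne' (χ + 1)]
        rw [this]
        ring
      linarith
    have hmul : (t : ℝ) * (S - P) ≤ 0 := mul_nonpos_of_nonneg_of_nonpos htR.le e3
    have hring : (t : ℝ) * (-2 * S)
        + 2 * ((t : ℝ) * P - ∑ k ∈ Finset.Icc 1 (t - 1), (k : ℝ) * r (k : ℤ))
        = -2 * ((t : ℝ) * (S - P)) - 2 * ∑ k ∈ Finset.Icc 1 (t - 1), (k : ℝ) * r (k : ℤ) := by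
      ring
    rw [e1, e2]
    rw [hD] at *
    linarith [hring, hmul, e4, e5]
  -- V tends to infinity, hence is bounded below by 1 eventually
  have hχ2pos : (0 : ℝ) < χ + 2 := by linarith
  have hJ2' : (0 : ℝ) < -J2 := by linarith
  have htend : Filter.Tendsto (fun t : ℕ => D + (-J2) * (t : ℝ) ^ (χ + 2))
      Filter.atTop Filter.atTop := by
    apply Filter.tendsto_atTop_add_const_left _ D
    apply Filter.Tendsto.const_mul_atTop hJ2'
    exact (tendsto_rpow_atTop hχ2pos).comp tendsto_natCast_atTop_atTop
  obtain ⟨N0, hN0⟩ := Filter.eventually_atTop.mp (htend.eventually_ge_atTop 1)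
  set N : ℕ := max N0 (2 * T0) with hN
  have hVN : ∀ t : ℕ, N ≤ t → (1 : ℝ) ≤ V r t := by
    intro t htN
    have h1 := hN0 t (le_trans (le_max_left _ _) htN)
    have h2 := hVlow t (le_trans (le_max_right _ _) htN)
    linarith
  have hNne : (Finset.Icc 1 N).Nonempty := ⟨1, by simp only [Finset.mem_Icc]; omega⟩
  set v : ℝ := min 1 ((Finset.Icc 1 N).inf' hNne (V r)) with hv
  have hv0 : 0 < v := by
    apply lt_min one_pos
    rw [Finset.lt_inf'_iff]
    intro b hb
    simp only [Finset.mem_Icc] at hb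
    exact hVpos b hb.1
  have hvle : ∀ t : ℕ, 1 ≤ t → v ≤ V r t := by
    intro t ht
    by_cases h : t ≤ N
    · exact le_trans (min_le_right _ _)
        (Finset.inf'_le _ (by simp only [Finset.mem_Icc]; omega))
    · exact le_trans (min_le_left _ _) (hVN t (by omega))
  refine ⟨(T0 : ℝ) * A / v + 1, by positivity, ?_⟩
  intro s t ht hts
  have hVt := hVpos t ht
  have hkey : Cst r s t / V r t ≤ (T0 : ℝ) * A / v :=
    div_le_div₀ (by positivity) (hCst s t ht hts) hv0 (hvle t ht)
  linarith
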